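/- Let ∃X[F] be an ∃CNF formula and q an assignment to V(F). If a variable v of X \ Vars(q) is blocked in F|q, then v is locally redundant in ∃X[F|q], i.e., the set {v} is redundant in ∃X[F|q] with scope {v}. -/

import Mathlib

open scoped Classical

namespace QE

variable {α : Type*}

/-- A literal: a variable together with a polarity. -/
abbrev Lit (α : Type*) := α × Bool

/-- A clause: a finite disjunction of literals. -/
abbrev Clause (α : Type*) := Finset (Lit α)

/-- A CNF formula: a finite conjunction of clauses. -/
abbrev CNF (α : Type*) := Finset (Clause α)

/-- A (partial) assignment of Boolean values to variables. -/
abbrev Assign (α : Type*) := α → Option Bool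

/-- The variables of a clause. -/
def clauseVars (C : Clause α) : Set α := {v | ∃ b, (v, b) ∈ C}

/-- The variables of a CNF formula. -/
def cnfVars (F : CNF α) : Set α := ⋃ C ∈ F, clauseVars C

/-- The variables assigned by a partial assignment. -/
def avars (q : Assign α) : Set α := {v | q v ≠ none}

/-- The (partial) assignment `r` extends the (partial) assignment `q`, i.e. `q ⊆ r`. -/
def AExtends (q r : Assign α) : Prop := ∀ v b, q v = some b → r v = some b

/-- The complete assignment (point) `p` extends the partial assignment `q`, i.e. `q ⊆ p`. -/
def PExtends (q : Assign α) (p : α → Bool) : Prop := ∀ v b, q v = some b → p v = b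

/-- A complete assignment satisfies a clause. -/
def pointSatClause (p : α → Bool) (C : Clause α) : Prop := ∃ l ∈ C, p l.1 = l.2

/-- A complete assignment satisfies a CNF formula. -/
def pointSatCNF (p : α → Bool) (F : CNF α) : Prop := ∀ C ∈ F, pointSatClause p C

/-- A partial assignment satisfies a clause. -/
def asatClause (q : Assign α) (C : Clause α) : Prop := ∃ l ∈ C, q l.1 = some l.2

/-- A partial assignment falsifies a literal. -/
def afalsLit (q : Assign α) (l : Lit α) : Prop := q l.1 = some (!l.2)

/-- The cofactor of a clause: remove the literals falsified by `q`. -/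
noncomputable def cofClause (q : Assign α) (C : Clause α) : Clause α :=
  C.filter (fun l => ¬ afalsLit q l)

/-- The cofactor `F|q`: remove clauses satisfied by `q` and delete from the
remaining clauses all literals falsified by `q`. -/
noncomputable def cofactor (q : Assign α) (F : CNF α) : CNF α :=
  (F.filter (fun C => ¬ asatClause q C)).image (cofClause q)

/-- The CNF formula `F` implies the clause `C`. -/
def Implies (F : CNF α) (C : Clause α) : Prop :=
  ∀ p : α → Bool, pointSatCNF p F → pointSatClause p C

/-- `C` is a `Z`-clause: `V(C) ∩ Z ≠ ∅`. -/
def IsZClause (Z : Set α) (C : Clause α) : Prop := (clauseVars C ∩ Z).Nonempty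

/-- `F^Z`: the set of `Z`-clauses of `F`. -/
noncomputable def zClauses (F : CNF α) (Z : Set α) : CNF α :=
  F.filter (fun C => IsZClause Z C)

/-- `p` is a `Z`-boundary point of `F`: `Z ≠ ∅`, `p` falsifies `F`, every clause of `F`
falsified by `p` is a `Z`-clause, and the latter condition fails for every proper subset of `Z`. -/
def BoundaryPt (F : CNF α) (Z : Set α) (p : α → Bool) : Prop :=
  Z.Nonempty ∧ ¬ pointSatCNF p F ∧
  (∀ C ∈ F, ¬ pointSatClause p C → IsZClause Z C) ∧
  (∀ Z' ⊂ Z, ¬ (∀ C ∈ F, ¬ pointSatClause p C → IsZClause Z' C))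

/-- A point `p` is `W`-removable in `F`: there is a clause `C` such that `F` implies `C`,
`p` falsifies `C`, and `V(C) ∩ W = ∅`. -/
def Removable (F : CNF α) (W : Set α) (p : α → Bool) : Prop :=
  ∃ C : Clause α, Implies F C ∧ ¬ pointSatClause p C ∧ clauseVars C ∩ W = ∅

/-- The variables of `Z` are redundant in `∃X[F]` with scope `W`: for every nonempty
subset `Vs ⊆ Z` there is no `W`-removable `Vs`-boundary point of `F`. -/
def RedundantWithScope (F : CNF α) (Z W : Set α) : Prop :=
  ∀ Vs : Set α, Vs ⊆ Z → Vs.Nonempty →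
    ∀ p : α → Bool, BoundaryPt F Vs p → ¬ Removable F W p

/-- The D-sequent `(∃X[F], q, W) → Z`: the variables of `Z` are redundant
in `∃X[F|q]` with scope `W`. -/
def DSeq (F : CNF α) (X : Set α) (q : Assign α) (W Z : Set α) : Prop :=
  RedundantWithScope (cofactor q F) Z W

/-- `∃X[F] ≡ ∃X[H]`. -/
def ExEquiv (X : Set α) (F H : CNF α) : Prop :=
  ∀ p : α → Bool,
    (∃ p' : α → Bool, (∀ v ∉ X, p' v = p v) ∧ pointSatCNF p' F) ↔
    (∃ p' : α → Bool, (∀ v ∉ X, p' v = p v) ∧ pointSatCNF p' H)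

/-- The variables of `Z` are redundant in `∃X[F]`: `∃X[F] ≡ ∃X[F \ F^Z]`. -/
noncomputable def Redundant (F : CNF α) (X Z : Set α) : Prop :=
  ExEquiv X F (F \ zClauses F Z)

/-- Clauses `C` and `C'` contain opposite literals of the variable `w`. -/
def oppLitOn (C C' : Clause α) (w : α) : Prop := ∃ b, (w, b) ∈ C ∧ (w, !b) ∈ C'

/-- Clauses `C` and `C'` are resolvable on `v`: they contain opposite literals of
exactly one variable, namely `v`. -/
def ResolvableOn (C C' : Clause α) (v : α) : Prop := ∀ w, oppLitOn C C' w ↔ w = v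

/-- A variable `v` is blocked in `F`: no two clauses of `F` are resolvable on `v`. -/
def BlockedVar (F : CNF α) (v : α) : Prop :=
  ∀ C ∈ F, ∀ C' ∈ F, ¬ ResolvableOn C C' v

/-- Assignments `q` and `q'` assign opposite values to the variable `w`. -/
def aOppOn (q q' : Assign α) (w : α) : Prop := ∃ b, q w = some b ∧ q' w = some (!b)

/-- Assignments `q` and `q'` are resolvable on `v`: exactly one variable assigned by
both of them, namely `v`, is assigned opposite values. -/
def AResolvableOn (q q' : Assign α) (v : α) : Prop := ∀ w, aOppOn q q' w ↔ w = v

/-- The resolvent of assignments `q` and `q'` on `v`: all single-variable assignments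
of `q` and `q'` except those to `v`. -/
noncomputable def aResolvent (q q' : Assign α) (v : α) : Assign α :=
  fun w => if w = v then none else ((q w).orElse (fun _ => q' w))




/-- Proposition 5: If a variable `v ∈ X \ Vars(q)` is blocked in `F|q`,
then `v` is locally redundant in `∃X[F|q]`, i.e. `{v}` is redundant in `∃X[F|q]`
with scope `{v}`. -/
theorem blocked_locally_redundant {α : Type*} (F : CNF α) (X : Set α) (q : Assign α) (v : α)
    (hX : X ⊆ cnfVars F) (hq : avars q ⊆ cnfVars F)
    (hv : v ∈ X \ avars q) (hbl : BlockedVar (cofactor q F) v) :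
    RedundantWithScope (cofactor q F) {v} {v} := by
  set G := cofactor q F with hG
  intro Vs hVs hne p hbp hrem
  have hVs' : Vs = {v} := (Set.Nonempty.subset_singleton_iff hne).mp hVs
  subst hVs'
  obtain ⟨-, hfals, hbd, -⟩ := hbp
  obtain ⟨C, hCimp, hCfals, hCvars⟩ := hrem
  -- v is not in C
  have hvC : ∀ b : Bool, (v, b) ∉ C := by
    intro b hb
    have : v ∈ clauseVars C ∩ {v} := ⟨⟨b, hb⟩, rfl⟩
    rw [hCvars] at this; exact this
  -- a clause of G falsified by p, containing v
  rw [pointSatCNF] at hfals; push_neg at hfals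
  obtain ⟨C1, hC1G, hC1f⟩ := hfals
  obtain ⟨w1, ⟨b1, hb1⟩, hw1v⟩ := hbd C1 hC1G hC1f
  cases hw1v
  have hpv : p v ≠ b1 := by
    intro h; exact hC1f ⟨(v, b1), hb1, h⟩
  -- flipped point
  set p' : α → Bool := Function.update p v (!(p v)) with hp'
  have hp'v : p' v = !(p v) := Function.update_self _ _ _
  have hp'w : ∀ w, w ≠ v → p' w = p w := fun w hw => Function.update_of_ne hw _ _
  -- p' falsifies C
  have hCf' : ¬ pointSatClause p' C := by
    rintro ⟨⟨w, b⟩, hl, hpl⟩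
    apply hCfals
    refine ⟨(w, b), hl, ?_⟩
    have hwv : w ≠ v := fun h => hvC b (h ▸ hl)
    rwa [hp'w w hwv] at hpl
  -- p' falsifies G, get C2
  have hGf' : ¬ pointSatCNF p' G := fun h => hCf' (hCimp p' h)
  rw [pointSatCNF] at hGf'; push_neg at hGf'
  obtain ⟨C2, hC2G, hC2f⟩ := hGf'
  -- C2 contains a literal of v
  have hvC2 : ∃ b, (v, b) ∈ C2 := by
    by_contra hno
    push_neg at hno
    have hC2fp : ¬ pointSatClause p C2 := by
      rintro ⟨⟨w, b⟩, hl, hpl⟩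
      apply hC2f
      refine ⟨(w, b), hl, ?_⟩
      have hwv : w ≠ v := fun h => hno b (h ▸ hl)
      rwa [hp'w w hwv]
    obtain ⟨w2, ⟨b2, hb2⟩, hw2v⟩ := hbd C2 hC2G hC2fp
    cases hw2v
    exact hno b2 hb2
  obtain ⟨b2, hb2⟩ := hvC2
  have hpb2 : p' v ≠ b2 := fun h => hC2f ⟨(v, b2), hb2, h⟩
  -- b1 = !(p v), b2 = p v
  have hb1v : b1 = !(p v) := by
    cases h1 : p v <;> cases h2 : b1 <;> simp_all
  have hb2v : b2 = p v := by
    rw [hp'v] at hpb2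
    cases h1 : p v <;> cases h2 : b2 <;> simp_all
  -- C1 and C2 are resolvable on v, contradiction
  apply hbl C1 hC1G C2 hC2G
  intro w
  constructor
  · rintro ⟨b, hbC1, hbC2⟩
    by_contra hwv
    have h1 : p w ≠ b := fun h => hC1f ⟨(w, b), hbC1, h⟩
    have h2 : p' w ≠ !b := fun h => hC2f ⟨(w, !b), hbC2, h⟩
    rw [hp'w w hwv] at h2
    cases h : p w <;> cases hb : b <;> simp_all
  · rintro rfl
    refine ⟨b1, hb1, ?_⟩
    rw [hb1v, Bool.not_not, ← hb2v]; exact hb2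

end QE
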